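/- For all integers a, b ≥ 1 one has the identity of formal power series in ℚ⟦z⟧: L̃i_{1−a}(z) · L̃i_{1−b}(z) = ∑_{j=1}^{a} λ^j_{a,b}·L̃i_{1−j}(z) + ∑_{j=1}^{b} λ^j_{b,a}·L̃i_{1−j}(z) + L̃i_{1−(a+b)}(z), where λ^j_{a,b} = (−1)^{b−1}·binom(a+b−j−1, a−j)·B_{a+b−j}/(a+b−j)!. -/

import Mathlib

open Finset

/-- `L̃i_{1−s}(z) = (1/(s−1)!)·∑_{n>0} n^{s−1} z^n ∈ ℚ⟦z⟧` for `s ≥ 1`. -/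
noncomputable def Ltilde (s : ℕ) : PowerSeries ℚ :=
  PowerSeries.mk fun n => if n = 0 then 0 else (n : ℚ) ^ (s - 1) / (s - 1).factorial

/-- The coefficient `λ^j_{a,b} = (−1)^{b−1}·binom(a+b−j−1, a−j)·B_{a+b−j}/(a+b−j)!`,
where `B_k` is the `k`-th Bernoulli number with `B_1 = −1/2` (Mathlib's `bernoulli`). -/
noncomputable def lambdaCoeff (j a b : ℕ) : ℚ :=
  (-1 : ℚ) ^ (b - 1) * ((a + b - j - 1).choose (a - j)) * bernoulli (a + b - j) /
    (a + b - j).factorial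

/-- numeric coefficient of `Ltilde`. -/
noncomputable def cc (s n : ℕ) : ℚ :=
  if n = 0 then 0 else (n : ℚ) ^ (s - 1) / (s - 1).factorial

/-- combined coefficient. -/
noncomputable def Lam (j a b : ℕ) : ℚ :=
  (if j ≤ a then lambdaCoeff j a b else 0) + (if j ≤ b then lambdaCoeff j b a else 0) +
    (if j = a + b then 1 else 0)

lemma cc_zero (s : ℕ) : cc s 0 = 0 := by simp [cc]

lemma hc (s n : ℕ) (hs : 1 ≤ s) : (s : ℚ) * cc (s + 1) n = (n : ℚ) * cc s n := by
  obtain ⟨t, rfl⟩ := Nat.exists_eq_add_of_le hs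
  rcases eq_or_ne n 0 with rfl | hn
  · simp [cc]
  · simp only [cc, if_neg hn]
    have h1 : (1 + t + 1) - 1 = t + 1 := by omega
    have h2 : (1 + t) - 1 = t := by omega
    rw [h1, h2, Nat.factorial_succ, pow_succ]
    have : ((t : ℚ) + 1) ≠ 0 := by positivity
    have : ((t.factorial : ℚ)) ≠ 0 := by exact_mod_cast t.factorial_ne_zero
    push_cast
    field_simp
    ring

/-- shift identity for `lambdaCoeff`. -/
lemma lam_shift (a b j : ℕ) (hj : 1 ≤ j) :
    lambdaCoeff j (a + 1) b = lambdaCoeff (j - 1) a b := by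
  unfold lambdaCoeff
  rw [show a + 1 + b - j - 1 = a + b - (j - 1) - 1 by omega,
    show a + 1 - j = a - (j - 1) by omega,
    show a + 1 + b - j = a + b - (j - 1) by omega]

lemma G1 (a b j : ℕ) (hj : 1 ≤ j) (hja : j ≤ a) (hb : 1 ≤ b) :
    (a : ℚ) * lambdaCoeff j (a + 1) b - ((j - 1 : ℕ) : ℚ) * lambdaCoeff (j - 1) a b
      + (b : ℚ) * lambdaCoeff j a (b + 1) = 0 := by
  rw [lam_shift a b j hj]
  unfold lambdaCoeff
  rw [show a + b - (j-1) - 1 = a + b - j by omega,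
    show a - (j-1) = (a - j) + 1 by omega,
    show a + b - (j-1) = a + b + 1 - j by omega,
    show a + (b+1) - j - 1 = a + b - j by omega,
    show a + (b+1) - j = a + b + 1 - j by omega,
    show (b+1) - 1 = (b-1) + 1 by omega]
  have key : (((a+b-j).choose ((a-j)+1) : ℚ)) * ((a : ℚ) - j + 1) =
      ((a+b-j).choose (a-j) : ℚ) * b := by
    have h := Nat.choose_succ_right_eq (a+b-j) (a-j)
    rw [show a + b - j - (a - j) = b by omega] at h
    have : (((a+b-j).choose ((a-j)+1) * ((a-j)+1) : ℕ) : ℚ)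
        = (((a+b-j).choose (a-j) * b : ℕ) : ℚ) := by exact_mod_cast congrArg (Nat.cast : ℕ → ℚ) h
    push_cast at this
    rw [show ((a : ℚ) - j + 1) = ((a - j : ℕ) : ℚ) + 1 by push_cast [hja]; ring]
    exact this
  have hc1 : ((j - 1 : ℕ) : ℚ) = (j : ℚ) - 1 := by push_cast [hj]; ring
  rw [hc1, pow_succ]
  linear_combination ((-1:ℚ)^(b-1) * bernoulli (a+b+1-j) / ((a+b+1-j).factorial : ℚ)) * key

lemma G2 (a b j : ℕ) (hj : 1 ≤ j) (hjb : j ≤ b) (ha : 1 ≤ a) :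
    (a : ℚ) * lambdaCoeff j b (a + 1) - ((j - 1 : ℕ) : ℚ) * lambdaCoeff (j - 1) b a
      + (b : ℚ) * lambdaCoeff j (b + 1) a = 0 := by
  rw [lam_shift b a j hj]  -- lambdaCoeff j (b+1) a = lambdaCoeff (j-1) b a
  unfold lambdaCoeff
  rw [show b + (a+1) - j - 1 = a + b - j by omega,
    show b + (a+1) - j = a + b + 1 - j by omega,
    show b + a - (j-1) - 1 = a + b - j by omega,
    show b - (j-1) = (b - j) + 1 by omega,
    show b + a - (j-1) = a + b + 1 - j by omega,
    show (a+1) - 1 = (a-1) + 1 by omega]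
  have key : (((a+b-j).choose ((b-j)+1) : ℚ)) * ((b : ℚ) - j + 1) =
      ((a+b-j).choose (b-j) : ℚ) * a := by
    have h := Nat.choose_succ_right_eq (a+b-j) (b-j)
    rw [show a + b - j - (b - j) = a by omega] at h
    have : (((a+b-j).choose ((b-j)+1) * ((b-j)+1) : ℕ) : ℚ)
        = (((a+b-j).choose (b-j) * a : ℕ) : ℚ) := by exact_mod_cast congrArg (Nat.cast : ℕ → ℚ) h
    push_cast at this
    rw [show ((b : ℚ) - j + 1) = ((b - j : ℕ) : ℚ) + 1 by push_cast [hjb]; ring]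
    exact this
  have hc1 : ((j - 1 : ℕ) : ℚ) = (j : ℚ) - 1 := by push_cast [hj]; ring
  rw [hc1, pow_succ]
  linear_combination ((-1:ℚ)^(a-1) * bernoulli (a+b+1-j) / ((a+b+1-j).factorial : ℚ)) * key

lemma K3 (a b j : ℕ) (ha : 1 ≤ a) (hb : 1 ≤ b) (hj : 1 ≤ j) (hj2 : j ≤ a + b + 1) :
    (a : ℚ) * Lam j (a + 1) b =
      ((j - 1 : ℕ) : ℚ) * Lam (j - 1) a b - (b : ℚ) * Lam j a (b + 1) := by
  unfold Lam
  rcases eq_or_ne j (a + b + 1) with rfl | htop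
  · rw [if_neg (show ¬(a + b + 1 ≤ a + 1) by omega),
      if_neg (show ¬(a + b + 1 ≤ b) by omega),
      if_pos (show a + b + 1 = a + 1 + b by omega),
      if_neg (show ¬(a + b + 1 - 1 ≤ a) by omega),
      if_neg (show ¬(a + b + 1 - 1 ≤ b) by omega),
      if_pos (show a + b + 1 - 1 = a + b by omega),
      if_neg (show ¬(a + b + 1 ≤ a) by omega),
      if_neg (show ¬(a + b + 1 ≤ b + 1) by omega),
      if_pos (show a + b + 1 = a + (b + 1) by omega)]
    have : ((a + b + 1 - 1 : ℕ) : ℚ) = (a : ℚ) + b := by push_cast; ring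
    rw [this]; ring
  · rw [if_neg (show ¬(j = a + 1 + b) by omega),
      if_neg (show ¬(j - 1 = a + b) by omega),
      if_neg (show ¬(j = a + (b + 1)) by omega)]
    have grp1 : (a : ℚ) * (if j ≤ a + 1 then lambdaCoeff j (a+1) b else 0)
        = ((j - 1 : ℕ) : ℚ) * (if j - 1 ≤ a then lambdaCoeff (j-1) a b else 0)
          - (b : ℚ) * (if j ≤ a then lambdaCoeff j a (b+1) else 0) := by
      rcases lt_trichotomy j (a + 1) with h | h | h
      · rw [if_pos (show j ≤ a + 1 by omega), if_pos (show j - 1 ≤ a by omega),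
          if_pos (show j ≤ a by omega)]
        linarith [G1 a b j hj (by omega) hb]
      · rw [if_pos (show j ≤ a + 1 by omega), if_pos (show j - 1 ≤ a by omega),
          if_neg (show ¬(j ≤ a) by omega), lam_shift a b j hj]
        have : ((j - 1 : ℕ) : ℚ) = (a : ℚ) := by
          have : j - 1 = a := by omega
          rw [this]
        rw [this]; ring
      · rw [if_neg (show ¬(j ≤ a + 1) by omega), if_neg (show ¬(j - 1 ≤ a) by omega),
          if_neg (show ¬(j ≤ a) by omega)]; ring
    have grp2 : (a : ℚ) * (if j ≤ b then lambdaCoeff j b (a+1) else 0)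
        = ((j - 1 : ℕ) : ℚ) * (if j - 1 ≤ b then lambdaCoeff (j-1) b a else 0)
          - (b : ℚ) * (if j ≤ b + 1 then lambdaCoeff j (b+1) a else 0) := by
      rcases lt_trichotomy j (b + 1) with h | h | h
      · rw [if_pos (show j ≤ b by omega), if_pos (show j - 1 ≤ b by omega),
          if_pos (show j ≤ b + 1 by omega)]
        linarith [G2 a b j hj (by omega) ha]
      · rw [if_neg (show ¬(j ≤ b) by omega), if_pos (show j - 1 ≤ b by omega),
          if_pos (show j ≤ b + 1 by omega), lam_shift b a j hj]
        have : ((j - 1 : ℕ) : ℚ) = (b : ℚ) := by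
          have : j - 1 = b := by omega
          rw [this]
        rw [this]; ring
      · rw [if_neg (show ¬(j ≤ b) by omega), if_neg (show ¬(j - 1 ≤ b) by omega),
          if_neg (show ¬(j ≤ b + 1) by omega)]; ring
    linear_combination grp1 + grp2

/-- the `j = 1` discrepancy term. -/
lemma j1 (b : ℕ) (hb : 1 ≤ b) :
    ((-1 : ℚ) ^ (b - 1) + 1) * bernoulli b / b.factorial = if b = 1 then -1 else 0 := by
  rcases eq_or_ne b 1 with rfl | hb1
  · norm_num [bernoulli_one]
  · rw [if_neg hb1]
    rcases Nat.even_or_odd b with he | ho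
    · have : Odd (b - 1) := by
        rcases he with ⟨t, rfl⟩; exact ⟨t - 1, by omega⟩
      rw [this.neg_one_pow]; ring
    · have : bernoulli b = 0 := by
        rw [bernoulli_eq_bernoulli'_of_ne_one hb1]
        exact bernoulli'_eq_zero_of_odd ho (by omega)
      rw [this]; ring

lemma Lam_one_one (b : ℕ) (hb : 1 ≤ b) :
    Lam 1 1 b = ((-1 : ℚ) ^ (b - 1) + 1) * bernoulli b / b.factorial := by
  unfold Lam lambdaCoeff
  rw [if_pos le_rfl, if_pos hb, if_neg (by omega)]
  rw [show 1 + b - 1 - 1 = b - 1 by omega, show 1 - 1 = 0 by rfl,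
    show 1 + b - 1 = b by omega, show b + 1 - 1 - 1 = b - 1 by omega,
    show b + 1 - 1 = b by omega]
  rw [Nat.choose_zero_right, Nat.choose_self]
  push_cast
  ring

/-- termwise match between Faulhaber terms and `Lam` terms. -/
lemma term_match (b n i : ℕ) (hb : 1 ≤ b) (hi : i < b) (hn : n ≠ 0) :
    bernoulli (b-1-i) * ((b.choose (b-1-i) : ℕ) : ℚ) * (n:ℚ) ^ (b - (b-1-i)) / b / (b-1).factorial
      = Lam (2+i) 1 b * cc (2+i) n := by
  have hbfac : ((b.factorial : ℕ) : ℚ) = (b : ℚ) * (b-1).factorial := by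
    rw [show b = (b-1) + 1 by omega, Nat.factorial_succ]
    push_cast
    ring
  rcases eq_or_ne i (b-1) with rfl | hib
  · -- top term j = b+1
    unfold Lam cc
    rw [if_neg (by omega), if_neg (by omega), if_pos (by omega), if_neg hn]
    rw [show b - 1 - (b-1) = 0 by omega, show b - 0 = b by omega,
      show 2 + (b-1) - 1 = b by omega]
    rw [bernoulli_zero, Nat.choose_zero_right]
    have h1 : ((b:ℚ)) ≠ 0 := by positivity
    have h2 : (((b-1).factorial : ℕ) : ℚ) ≠ 0 := by exact_mod_cast (b-1).factorial_ne_zero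
    have h3 : ((b.factorial : ℕ) : ℚ) ≠ 0 := by exact_mod_cast b.factorial_ne_zero
    field_simp
    rw [hbfac]; push_cast; ring
  · -- middle terms
    unfold Lam cc lambdaCoeff
    rw [if_neg (by omega), if_pos (show 2 + i ≤ b by omega), if_neg (by omega), if_neg hn]
    rw [show b + 1 - (2+i) - 1 = b - (2+i) by omega, show b + 1 - (2+i) = b-1-i by omega,
      show b - (2+i) = b - 1 - i - 1 by omega,
      show (1:ℕ) - 1 = 0 by rfl, show 2 + i - 1 = i + 1 by omega,
      show b - (b-1-i) = i + 1 by omega]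
    rw [show b - 1 - i = (b-1-i-1) + 1 by omega] at *
    rw [Nat.choose_self, pow_zero]
    have key := Nat.choose_mul_factorial_mul_factorial
      (show (b-1-i-1) + 1 ≤ b by omega)
    rw [show b - ((b-1-i-1)+1) = i + 1 by omega] at key
    have key' : ((b.choose ((b-1-i-1)+1) : ℕ) : ℚ) * ((b-1-i-1)+1).factorial
        * (i+1).factorial = (b.factorial : ℚ) := by exact_mod_cast congrArg (Nat.cast : ℕ → ℚ) key
    have h1 : ((b:ℚ)) ≠ 0 := by positivity
    have h2 : (((b-1).factorial : ℕ) : ℚ) ≠ 0 := by exact_mod_cast (b-1).factorial_ne_zero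
    have h4 : ((((b-1-i-1)+1).factorial : ℕ) : ℚ) ≠ 0 := by
      exact_mod_cast ((b-1-i-1)+1).factorial_ne_zero
    have h5 : (((i+1).factorial : ℕ) : ℚ) ≠ 0 := by exact_mod_cast (i+1).factorial_ne_zero
    field_simp
    rw [hbfac] at key'
    push_cast at key' ⊢
    linear_combination (bernoulli ((b-1-i-1)+1)) * key'

lemma base_case (b n : ℕ) (hb : 1 ≤ b) :
    ∑ p ∈ antidiagonal n, cc 1 p.1 * cc b p.2 = ∑ j ∈ Icc 1 (1+b), Lam j 1 b * cc j n := by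
  rcases eq_or_ne n 0 with rfl | hn
  · simp [Finset.Nat.antidiagonal_zero, cc]
  -- LHS reduction to ∑_{m < n} cc b m
  have lhs1 : ∑ p ∈ antidiagonal n, cc 1 p.1 * cc b p.2 = ∑ m ∈ range n, cc b m := by
    rw [Finset.Nat.sum_antidiagonal_eq_sum_range_succ_mk, Finset.sum_range_succ']
    have e1 : ∀ k : ℕ, cc 1 (k+1) = 1 := by intro k; simp [cc]
    have e2 : cc 1 0 = 0 := by simp [cc]
    simp only [e1, e2, one_mul, zero_mul, add_zero]
    rw [show (fun k => cc b (n - (k+1))) = (fun k => cc b (n - 1 - k)) from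
      funext fun k => by rw [show n - (k+1) = n - 1 - k by omega]]
    exact Finset.sum_range_reflect (fun m => cc b m) n
  rw [lhs1]
  -- split off the m = 0 correction
  have split : ∑ m ∈ range n, cc b m =
      (∑ m ∈ range n, (m:ℚ)^(b-1)) / (b-1).factorial + (if b = 1 then -1 else 0) := by
    have h0 : ∑ m ∈ range n, ((m:ℚ)^(b-1)/((b-1).factorial) - cc b m)
        = (0:ℚ)^(b-1)/((b-1).factorial) := by
      rw [Finset.sum_eq_single 0]
      · simp [cc]
      · intro m hm hm0; simp [cc, if_neg hm0]
      · intro h; exact absurd (Finset.mem_range.mpr (by omega)) h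
    rw [Finset.sum_sub_distrib, ← Finset.sum_div] at h0
    have hz : (0:ℚ)^(b-1)/((b-1).factorial) = if b = 1 then 1 else 0 := by
      rcases eq_or_ne b 1 with rfl | hb1
      · norm_num
      · rw [if_neg hb1, zero_pow (by omega), zero_div]
    rw [hz] at h0
    rcases eq_or_ne b 1 with rfl | hb1 <;> simp_all <;> linarith
  rw [split]
  -- Faulhaber
  have faul : ∑ m ∈ range n, (m:ℚ)^(b-1) =
      ∑ i ∈ range b, bernoulli i * ((b.choose i : ℕ) : ℚ) * (n:ℚ)^(b-i) / b := by
    have h := sum_range_pow n (b-1)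
    rw [show b - 1 + 1 = b by omega] at h
    rw [h]
    apply Finset.sum_congr rfl
    intro i _
    rw [show ((b-1 : ℕ):ℚ) + 1 = (b:ℚ) by push_cast [hb]; ring]
  rw [faul, Finset.sum_div]
  -- RHS: peel off j = 1 and reindex
  have hIcc : Icc 1 (1+b) = insert 1 (Icc 2 (1+b)) := by
    ext x; simp only [mem_Icc, mem_insert]; omega
  rw [hIcc, Finset.sum_insert (by simp)]
  have hmap : Icc 2 (1+b) = (range b).map (addRightEmbedding 2) := by
    rw [Nat.range_eq_Icc_zero_sub_one b (by omega), Finset.map_add_right_Icc]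
    congr 1 <;> omega
  rw [hmap, Finset.sum_map]
  simp only [addRightEmbedding_apply]
  have hrefl : ∑ i ∈ range b, bernoulli i * ((b.choose i : ℕ) : ℚ) * (n:ℚ)^(b-i) / b / (b-1).factorial
      = ∑ i ∈ range b,
        bernoulli (b-1-i) * ((b.choose (b-1-i) : ℕ) : ℚ) * (n:ℚ)^(b-(b-1-i)) / b / (b-1).factorial :=
    (Finset.sum_range_reflect
      (fun i => bernoulli i * ((b.choose i : ℕ) : ℚ) * (n:ℚ)^(b-i) / b / (b-1).factorial) b).symm
  rw [hrefl]
  have hsum : ∑ i ∈ range b,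
      bernoulli (b-1-i) * ((b.choose (b-1-i) : ℕ) : ℚ) * (n:ℚ)^(b-(b-1-i)) / b / (b-1).factorial
      = ∑ i ∈ range b, Lam (i+2) 1 b * cc (i+2) n := by
    apply Finset.sum_congr rfl
    intro i hi
    rw [show i + 2 = 2 + i by ring]
    exact term_match b n i hb (Finset.mem_range.mp hi) hn
  rw [hsum]
  have hone : Lam 1 1 b * cc 1 n = if b = 1 then -1 else 0 := by
    rw [Lam_one_one b hb, j1 b hb]
    have : cc 1 n = 1 := by simp [cc, hn]
    rw [this, mul_one]
  rw [hone]
  ring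

lemma main_lemma (a : ℕ) (ha : 1 ≤ a) : ∀ b, 1 ≤ b → ∀ n,
    ∑ p ∈ antidiagonal n, cc a p.1 * cc b p.2 = ∑ j ∈ Icc 1 (a+b), Lam j a b * cc j n := by
  induction a, ha using Nat.le_induction with
  | base => exact fun b hb n => base_case b n hb
  | succ a ha IH =>
    intro b hb n
    have ha0 : (a : ℚ) ≠ 0 := by positivity
    apply mul_left_cancel₀ ha0
    calc (a:ℚ) * ∑ p ∈ antidiagonal n, cc (a+1) p.1 * cc b p.2
        = ∑ p ∈ antidiagonal n, ((p.1:ℚ) * cc a p.1) * cc b p.2 := by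
          rw [Finset.mul_sum]
          exact Finset.sum_congr rfl fun p _ => by rw [← mul_assoc, hc a p.1 ha]
      _ = ∑ p ∈ antidiagonal n,
            ((n:ℚ) * (cc a p.1 * cc b p.2) - cc a p.1 * ((b:ℚ) * cc (b+1) p.2)) := by
          apply Finset.sum_congr rfl
          intro p hp
          have hmem := Finset.HasAntidiagonal.mem_antidiagonal.mp hp
          have hcast : (p.1 : ℚ) = (n : ℚ) - p.2 := by
            have : ((p.1 + p.2 : ℕ) : ℚ) = (n : ℚ) := by exact_mod_cast congrArg (Nat.cast : ℕ → ℚ) hmem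
            push_cast at this; linarith
          rw [hc b p.2 hb, hcast]; ring
      _ = (n:ℚ) * (∑ p ∈ antidiagonal n, cc a p.1 * cc b p.2)
            - (b:ℚ) * ∑ p ∈ antidiagonal n, cc a p.1 * cc (b+1) p.2 := by
          rw [Finset.sum_sub_distrib, ← Finset.mul_sum]
          congr 1
          rw [Finset.mul_sum]
          exact Finset.sum_congr rfl fun p _ => by ring
      _ = (n:ℚ) * ∑ j ∈ Icc 1 (a+b), Lam j a b * cc j n
            - (b:ℚ) * ∑ j ∈ Icc 1 (a+b+1), Lam j a (b+1) * cc j n := by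
          rw [IH b hb n, IH (b+1) (by omega) n, show a + (b+1) = a+b+1 by omega]
      _ = (∑ j ∈ Icc 1 (a+b), ((j:ℚ) * Lam j a b) * cc (j+1) n)
            - (b:ℚ) * ∑ j ∈ Icc 1 (a+b+1), Lam j a (b+1) * cc j n := by
          congr 1
          rw [Finset.mul_sum]
          apply Finset.sum_congr rfl
          intro j hj
          have hj1 : 1 ≤ j := (Finset.mem_Icc.mp hj).1
          linear_combination (-(Lam j a b)) * hc j n hj1
      _ = (∑ j ∈ Icc 2 (a+b+1), ((j-1 : ℕ):ℚ) * Lam (j-1) a b * cc j n)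
            - (b:ℚ) * ∑ j ∈ Icc 1 (a+b+1), Lam j a (b+1) * cc j n := by
          congr 1
          rw [show Icc 2 (a+b+1) = (Icc 1 (a+b)).map (addRightEmbedding 1) by
            rw [Finset.map_add_right_Icc]]
          rw [Finset.sum_map]
          simp only [addRightEmbedding_apply]
          apply Finset.sum_congr rfl
          intro j _
          rw [show j + 1 - 1 = j by omega, mul_assoc]
      _ = (∑ j ∈ Icc 1 (a+b+1), ((j-1 : ℕ):ℚ) * Lam (j-1) a b * cc j n)
            - (b:ℚ) * ∑ j ∈ Icc 1 (a+b+1), Lam j a (b+1) * cc j n := by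
          congr 1
          rw [show Icc 1 (a+b+1) = insert 1 (Icc 2 (a+b+1)) by
            ext x; simp only [mem_Icc, mem_insert]; omega]
          rw [Finset.sum_insert (by simp)]
          norm_num
      _ = ∑ j ∈ Icc 1 (a+b+1), ((a:ℚ) * Lam j (a+1) b) * cc j n := by
          rw [Finset.mul_sum, ← Finset.sum_sub_distrib]
          apply Finset.sum_congr rfl
          intro j hj
          obtain ⟨hj1, hj2⟩ := Finset.mem_Icc.mp hj
          rw [K3 a b j ha hb hj1 hj2]; ring
      _ = (a:ℚ) * ∑ j ∈ Icc 1 (a+1+b), Lam j (a+1) b * cc j n := by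
          rw [Finset.mul_sum, show a+1+b = a+b+1 by omega]
          exact Finset.sum_congr rfl fun j _ => by ring

lemma coeff_Ltilde (s n : ℕ) : (PowerSeries.coeff n) (Ltilde s) = cc s n := by
  simp [Ltilde, cc, PowerSeries.coeff_mk]

theorem Ltilde_mul (a b : ℕ) (ha : 1 ≤ a) (hb : 1 ≤ b) :
    Ltilde a * Ltilde b =
      (∑ j ∈ Finset.Icc 1 a, lambdaCoeff j a b • Ltilde j) +
      (∑ j ∈ Finset.Icc 1 b, lambdaCoeff j b a • Ltilde j) + Ltilde (a + b) := by
  ext n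
  rw [PowerSeries.coeff_mul]
  simp only [map_add, map_sum, LinearMap.map_smul, smul_eq_mul, coeff_Ltilde]
  have hmain : ∑ p ∈ antidiagonal n, cc a p.1 * cc b p.2
      = ∑ j ∈ Icc 1 (a+b), Lam j a b * cc j n := main_lemma a ha b hb n
  rw [hmain]
  unfold Lam
  simp only [add_mul]
  rw [Finset.sum_add_distrib, Finset.sum_add_distrib]
  have P1 : ∑ j ∈ Icc 1 (a+b), (if j ≤ a then lambdaCoeff j a b else 0) * cc j n
      = ∑ j ∈ Icc 1 a, lambdaCoeff j a b * cc j n := by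
    rw [← Finset.sum_subset
      ((Finset.Icc_subset_Icc_right (Nat.le_add_right a b)) : Icc 1 a ⊆ Icc 1 (a+b))
      (fun x hxb hx => by
        rw [if_neg (fun hxa => hx (Finset.mem_Icc.mpr
          ⟨(Finset.mem_Icc.mp hxb).1, hxa⟩)), zero_mul])]
    exact Finset.sum_congr rfl fun j hj => by
      rw [if_pos (Finset.mem_Icc.mp hj).2]
  have P2 : ∑ j ∈ Icc 1 (a+b), (if j ≤ b then lambdaCoeff j b a else 0) * cc j n
      = ∑ j ∈ Icc 1 b, lambdaCoeff j b a * cc j n := by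
    rw [← Finset.sum_subset
      ((Finset.Icc_subset_Icc_right (Nat.le_add_left b a)) : Icc 1 b ⊆ Icc 1 (a+b))
      (fun x hxm hx => by
        rw [if_neg (fun hxb => hx (Finset.mem_Icc.mpr
          ⟨(Finset.mem_Icc.mp hxm).1, hxb⟩)), zero_mul])]
    exact Finset.sum_congr rfl fun j hj => by
      rw [if_pos (Finset.mem_Icc.mp hj).2]
  have P3 : ∑ j ∈ Icc 1 (a+b), (if j = a+b then (1:ℚ) else 0) * cc j n = cc (a+b) n := by
    simp only [ite_mul, one_mul, zero_mul]
    rw [Finset.sum_ite_eq' (Icc 1 (a+b)) (a+b) (fun j => cc j n),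
      if_pos (Finset.mem_Icc.mpr ⟨by omega, le_rfl⟩)]
  rw [P1, P2, P3]
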